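/- Let F : ℝ^n → ℝ be convex, differentiable and L-strongly smooth for some L > 0. Fix ζ ∈ (0,1] and set λ = ζ²/(8L). Let x ∈ ℝ^n, put g = (1/λ)(x − prox_{λF}(x)), and let p ∈ ℝ^n satisfy ‖g − p‖² ≤ (1 − ζ²)‖g‖². Then F(x − λ p) ≤ F(x) − (ζ⁴/(16L)) ‖g‖². -/

import Mathlib

open scoped RealInnerProductSpace

lemma grad_convex_le {E : Type*} [NormedAddCommGroup E] [InnerProductSpace ℝ E] [CompleteSpace E]
    {Fn : E → ℝ} (hconv : ConvexOn ℝ Set.univ Fn) {a fa : E} (hd : HasGradientAt Fn fa a)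
    (b : E) : Fn a + ⟪fa, b - a⟫ ≤ Fn b := by
  set φ : ℝ → ℝ := fun s => Fn (a + s • (b - a)) with hφdef
  have hline : HasDerivAt (fun s : ℝ => a + s • (b - a)) (b - a) 0 := by
    simpa using ((hasDerivAt_id (0:ℝ)).smul_const (b - a)).const_add a
  have hφ : HasDerivAt φ ⟪fa, b - a⟫ 0 := by
    have hF : HasFDerivAt Fn (InnerProductSpace.toDual ℝ E fa) (a + (0:ℝ) • (b - a)) := by
      simpa using hasGradientAt_iff_hasFDerivAt.mp hd
    have h := hF.comp_hasDerivAt 0 hline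
    rw [InnerProductSpace.toDual_apply_apply] at h
    exact h
  have hslope : ∀ s ∈ Set.Ioc (0:ℝ) 1, slope φ 0 s ≤ Fn b - Fn a := by
    intro s hs
    have hcomb : a + s • (b - a) = (1 - s) • a + s • b := by
      module
    have := hconv.2 (Set.mem_univ a) (Set.mem_univ b) (by linarith [hs.2] : (0:ℝ) ≤ 1 - s)
      hs.1.le (by ring)
    rw [← hcomb] at this
    rw [slope_def_field, sub_zero, div_le_iff₀ hs.1]
    have h0 : φ 0 = Fn a := by simp [hφdef]
    rw [h0]
    simp only [hφdef, smul_eq_mul] at this ⊢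
    nlinarith [this]
  have htend : Filter.Tendsto (slope φ 0) (nhdsWithin 0 (Set.Ioi 0)) (nhds ⟪fa, b - a⟫) :=
    (hasDerivAt_iff_tendsto_slope.mp hφ).mono_left
      (nhdsWithin_mono 0 (fun y hy => ne_of_gt hy))
  have hle : ⟪fa, b - a⟫ ≤ Fn b - Fn a := by
    refine le_of_tendsto htend ?_
    filter_upwards [Ioc_mem_nhdsGT_of_mem (Set.mem_Ico.mpr ⟨le_refl 0, one_pos⟩)] with s hs
    exact hslope s hs
  linarith

lemma grad_cocoercive {E : Type*} [NormedAddCommGroup E] [InnerProductSpace ℝ E] [CompleteSpace E]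
    {Fn : E → ℝ} {F' : E → E} {L : ℝ} (hL : 0 < L)
    (hconv : ConvexOn ℝ Set.univ Fn) (hd : ∀ y, HasGradientAt Fn (F' y) y)
    (hsmooth : ∀ y y', Fn y' ≤ Fn y + ⟪F' y, y' - y⟫ + L / 2 * ‖y' - y‖ ^ 2)
    (a b : E) : Fn a + ⟪F' a, b - a⟫ + 1/(2*L) * ‖F' b - F' a‖^2 ≤ Fn b := by
  set d := F' b - F' a with hddef
  have h1 := grad_convex_le hconv (hd a) (b - (1/L) • d)
  have h2 := hsmooth b (b - (1/L) • d)
  have e1 : b - (1/L) • d - b = -((1/L) • d) := by abel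
  have e2 : b - (1/L) • d - a = (b - a) - (1/L) • d := by abel
  rw [e1] at h2
  rw [e2] at h1
  rw [inner_neg_right, real_inner_smul_right, norm_neg, norm_smul] at h2
  rw [inner_sub_right, real_inner_smul_right] at h1
  have e3 : ⟪F' b, d⟫ - ⟪F' a, d⟫ = ‖d‖^2 := by
    rw [← inner_sub_left, ← hddef, real_inner_self_eq_norm_sq]
  have e4 : ‖(1/L : ℝ)‖ = 1/L := by
    rw [Real.norm_eq_abs, abs_of_pos (by positivity)]
  rw [e4] at h2
  have e5 : L / 2 * ((1/L) * ‖d‖)^2 = 1/(2*L) * ‖d‖^2 := by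
    field_simp
  have e6 : 1/L * ⟪F' b, d⟫ = 1/L * ⟪F' a, d⟫ + 1/L * ‖d‖^2 := by
    have := congrArg (fun r => 1/L * r) e3
    simp only [mul_sub] at this
    linarith [this]
  have e7 : 1/L * ‖d‖^2 - 1/(2*L) * ‖d‖^2 = 1/(2*L) * ‖d‖^2 := by
    field_simp; ring
  linarith [h1, h2, e5, e6, e7]

lemma grad_lipschitz {E : Type*} [NormedAddCommGroup E] [InnerProductSpace ℝ E] [CompleteSpace E]
    {Fn : E → ℝ} {F' : E → E} {L : ℝ} (hL : 0 < L)
    (hconv : ConvexOn ℝ Set.univ Fn) (hd : ∀ y, HasGradientAt Fn (F' y) y)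
    (hsmooth : ∀ y y', Fn y' ≤ Fn y + ⟪F' y, y' - y⟫ + L / 2 * ‖y' - y‖ ^ 2)
    (a b : E) : ‖F' b - F' a‖ ≤ L * ‖b - a‖ := by
  have h1 := grad_cocoercive hL hconv hd hsmooth a b
  have h2 := grad_cocoercive hL hconv hd hsmooth b a
  have e1 : ‖F' a - F' b‖ = ‖F' b - F' a‖ := norm_sub_rev _ _
  rw [e1] at h2
  have e2 : ⟪F' b, a - b⟫ = -⟪F' b, b - a⟫ := by
    rw [← inner_neg_right]; congr 1; abel
  rw [e2] at h2
  have key : 1/L * ‖F' b - F' a‖^2 ≤ ⟪F' b - F' a, b - a⟫ := by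
    rw [inner_sub_left]
    have e7 : 1/L * ‖F' b - F' a‖^2 = 2*(1/(2*L) * ‖F' b - F' a‖^2) := by
      field_simp
    linarith [h1, h2, e7]
  have hcs := real_inner_le_norm (F' b - F' a) (b - a)
  rcases eq_or_lt_of_le (norm_nonneg (F' b - F' a)) with h0 | h0
  · rw [← h0]; positivity
  · have e8 : L * (1/L * ‖F' b - F' a‖^2) = ‖F' b - F' a‖^2 := by field_simp
    have k2 := mul_le_mul_of_nonneg_left key hL.le
    have k3 := mul_le_mul_of_nonneg_left hcs hL.le
    have : ‖F' b - F' a‖ * ‖F' b - F' a‖ ≤ (L * ‖b - a‖) * ‖F' b - F' a‖ := by nlinarith [k2, k3, e8]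
    exact le_of_mul_le_mul_right this h0

lemma key_ineq {t c G W : ℝ} (ht0 : 0 < t) (ht1 : t ≤ 1) (hc0 : 0 < c)
    (hG : 0 < G) (hW : 0 ≤ W) (hEc : t * G ^ 2 + (c ^ 2 * G ^ 2 + W ^ 2) ≤ 2 * (c * G ^ 2)) :
    t / 2 * G ^ 2 + t / 8 * ((1 - c) * (G * W)) + t / 16 * W ^ 2 ≤ c * G ^ 2 := by
  have hG2 : 0 < G ^ 2 := by positivity
  have hc2 : t ≤ 2 * c := by nlinarith [sq_nonneg (c * G), sq_nonneg W]
  have hc4 : t * t ≤ (2 * c) * (2 * c) := mul_le_mul hc2 hc2 ht0.le (by linarith)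
  nlinarith [hEc, mul_le_mul_of_nonneg_right hc4 (sq_nonneg G), sq_nonneg (t * G / 2 - W / 4),
    mul_nonneg (mul_nonneg (mul_nonneg ht0.le hc0.le) hG.le) hW,
    mul_nonneg (by linarith : (0:ℝ) ≤ 1 - t) (sq_nonneg W)]

set_option maxHeartbeats 1000000 in
/-- One-step descent property of the approximated proximal point method for an
`L`-strongly smooth convex function, under the edge condition. -/
theorem approx_prox_step_descent {n : ℕ}
    (F : EuclideanSpace ℝ (Fin n) → ℝ)
    (F' : EuclideanSpace ℝ (Fin n) → EuclideanSpace ℝ (Fin n))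
    (L : ℝ) (hL : 0 < L)
    (hconv : ConvexOn ℝ Set.univ F)
    (hdiff : ∀ y, HasGradientAt F (F' y) y)
    (hsmooth : ∀ y y', F y' ≤ F y + ⟪F' y, y' - y⟫ + L / 2 * ‖y' - y‖ ^ 2)
    (ζ : ℝ) (hζ : ζ ∈ Set.Ioc (0 : ℝ) 1)
    (lam : ℝ) (hlam : lam = ζ ^ 2 / (8 * L))
    (prox : EuclideanSpace ℝ (Fin n) → EuclideanSpace ℝ (Fin n))
    (hprox : ∀ y, IsMinOn (fun u => lam * F u + 1 / 2 * ‖u - y‖ ^ 2) Set.univ (prox y))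
    (x g p : EuclideanSpace ℝ (Fin n))
    (hg : g = (1 / lam) • (x - prox x))
    (hedge : ‖g - p‖ ^ 2 ≤ (1 - ζ ^ 2) * ‖g‖ ^ 2) :
    F (x - lam • p) ≤ F x - ζ ^ 4 / (16 * L) * ‖g‖ ^ 2 := by
  obtain ⟨hζ0, hζ1⟩ := hζ
  have hlam0 : 0 < lam := by rw [hlam]; positivity
  have hLl : L * lam = ζ ^ 2 / 8 := by rw [hlam]; field_simp
  have hR : ζ ^ 4 / (16 * L) = lam * (ζ ^ 2 / 2) := by rw [hlam]; field_simp; ring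
  set xp := prox x with hxpdef
  have hxg : x - xp = lam • g := by
    rw [hg, smul_smul, mul_one_div, div_self hlam0.ne', one_smul]
  -- gradient of the prox objective vanishes at xp
  have hgrad0 : lam • F' xp + (xp - x) = 0 := by
    have hmin : IsLocalMin (fun u => lam * F u + 1 / 2 * ‖u - x‖ ^ 2) xp :=
      (hprox x).isLocalMin Filter.univ_mem
    have hF : HasFDerivAt F (InnerProductSpace.toDual ℝ _ (F' xp)) xp := hdiff xp
    have hsub : HasFDerivAt (fun u : EuclideanSpace ℝ (Fin n) => u - x)
        (ContinuousLinearMap.id ℝ (EuclideanSpace ℝ (Fin n))) xp :=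
      (hasFDerivAt_id xp).sub_const x
    have hns := hsub.norm_sq
    have hsum := (hF.const_mul lam).add (hns.const_mul (1 / 2))
    have hd1 : HasFDerivAt (fun u => lam * F u + 1 / 2 * ‖u - x‖ ^ 2)
        (InnerProductSpace.toDual ℝ _ (lam • F' xp + (xp - x))) xp := by
      refine hsum.congr_fderiv ?_
      ext v
      simp [InnerProductSpace.toDual_apply_apply, inner_add_left, real_inner_smul_left, two_smul]
      ring
    have h0 := hmin.hasFDerivAt_eq_zero hd1
    exact (LinearIsometryEquiv.map_eq_zero_iff _).mp h0
  have hK1 : F' xp = g := by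
    have h1 : lam • F' xp = lam • g := by
      have : lam • F' xp = x - xp := by
        have := hgrad0
        rw [add_eq_zero_iff_eq_neg] at this
        rw [this]; abel
      rw [this, hxg]
    exact smul_right_injective _ hlam0.ne' h1
  have hK2 := grad_convex_le hconv (hdiff xp) x
  rw [hK1, hxg, real_inner_smul_right, real_inner_self_eq_norm_sq] at hK2
  -- hK2 : F xp + lam * ‖g‖ ^ 2 ≤ F x
  by_cases hg0 : g = 0
  · have hp0 : p = 0 := by
      have h := hedge
      rw [hg0] at h
      simp only [zero_sub, norm_neg, norm_zero] at h
      have h2 : ‖p‖ ^ 2 ≤ 0 := by nlinarith [h]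
      have h3 : ‖p‖ ^ 2 = 0 := le_antisymm h2 (by positivity)
      have h4 : ‖p‖ = 0 := (pow_eq_zero_iff two_ne_zero).mp h3
      exact norm_eq_zero.mp h4
    rw [hg0, hp0]
    simp only [smul_zero, sub_zero, norm_zero]
    norm_num
  have hGpos : 0 < ‖g‖ := norm_pos_iff.mpr hg0
  have hG2 : 0 < ‖g‖ ^ 2 := by positivity
  have hE : ζ ^ 2 * ‖g‖ ^ 2 + ‖p‖ ^ 2 ≤ 2 * ⟪g, p⟫ := by
    have h := hedge
    rw [norm_sub_sq_real] at h
    nlinarith [h]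
  by_cases hcase : ⟪g, p⟫ ≤ ‖g‖ ^ 2
  · -- c ≤ 1 : main case
    set c : ℝ := ⟪g, p⟫ / ‖g‖ ^ 2 with hcdef
    set w : EuclideanSpace ℝ (Fin n) := p - c • g with hwdef
    set z : EuclideanSpace ℝ (Fin n) := x - (lam * c) • g with hzdef
    have hcG : c * ‖g‖ ^ 2 = ⟪g, p⟫ := div_mul_cancel₀ _ hG2.ne'
    have hc0 : 0 < c := by
      apply div_pos ?_ hG2
      nlinarith [hE, sq_nonneg ‖p‖, mul_pos (pow_pos hζ0 2) hG2]
    have hc1 : c ≤ 1 := by rw [hcdef, div_le_one hG2]; exact hcase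
    have hgw : ⟪g, w⟫ = 0 := by
      rw [hwdef, inner_sub_right, real_inner_smul_right, real_inner_self_eq_norm_sq]
      linarith [hcG]
    have hp2 : ‖p‖ ^ 2 = c ^ 2 * ‖g‖ ^ 2 + ‖w‖ ^ 2 := by
      have hpw : p = c • g + w := by rw [hwdef]; abel
      rw [hpw, norm_add_sq_real, real_inner_smul_left, hgw, norm_smul]
      simp [mul_pow, sq_abs]
    have hxp2 : xp = x - lam • g := by rw [← hxg]; abel
    have hzconv : z = c • xp + (1 - c) • x := by rw [hzdef, hxp2]; module
    have hFz : F z ≤ F x - c * lam * ‖g‖ ^ 2 := by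
      have hcvx := hconv.2 (Set.mem_univ xp) (Set.mem_univ x) hc0.le
        (by linarith : (0:ℝ) ≤ 1 - c) (by ring)
      rw [← hzconv] at hcvx
      simp only [smul_eq_mul] at hcvx
      nlinarith [mul_le_mul_of_nonneg_left hK2 hc0.le]
    have hsz := hsmooth z (x - lam • p)
    have ey : x - lam • p - z = -(lam • w) := by rw [hzdef, hwdef]; module
    rw [ey, inner_neg_right, real_inner_smul_right, norm_neg, norm_smul,
      Real.norm_eq_abs, abs_of_pos hlam0] at hsz
    -- hsz : F y ≤ F z + -(lam * ⟪F' z, w⟫) + L/2 * (lam * ‖w‖)^2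
    have hinner : -⟪F' z, w⟫ ≤ ‖F' z - g‖ * ‖w‖ := by
      have e1 : -⟪F' z, w⟫ = ⟪g - F' z, w⟫ := by
        rw [inner_sub_left, hgw]; ring
      rw [e1]
      calc ⟪g - F' z, w⟫ ≤ ‖g - F' z‖ * ‖w‖ := real_inner_le_norm _ _
      _ = ‖F' z - g‖ * ‖w‖ := by rw [norm_sub_rev]
    have hlip : ‖F' z - g‖ ≤ L * (lam * (1 - c) * ‖g‖) := by
      have h := grad_lipschitz hL hconv hdiff hsmooth xp z
      rw [hK1] at h
      have ez : z - xp = (lam * (1 - c)) • g := by rw [hzdef, hxp2]; module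
      rw [ez, norm_smul, Real.norm_eq_abs,
        abs_of_nonneg (by nlinarith : (0:ℝ) ≤ lam * (1 - c))] at h
      linarith [h]
    -- numeric key inequality
    have hEc : ζ ^ 2 * ‖g‖ ^ 2 + (c ^ 2 * ‖g‖ ^ 2 + ‖w‖ ^ 2) ≤ 2 * (c * ‖g‖ ^ 2) := by
      rw [hcG, ← hp2]; exact hE
    have key : ζ ^ 2 / 2 * ‖g‖ ^ 2 + ζ ^ 2 / 8 * ((1 - c) * (‖g‖ * ‖w‖)) + ζ ^ 2 / 16 * ‖w‖ ^ 2
        ≤ c * ‖g‖ ^ 2 :=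
      key_ineq (by positivity) (by nlinarith) hc0 hGpos (norm_nonneg w) hEc
    -- assemble
    have hib : -(lam * ⟪F' z, w⟫) ≤ lam * (L * (lam * (1 - c) * ‖g‖) * ‖w‖) := by
      have h1 : -⟪F' z, w⟫ ≤ L * (lam * (1 - c) * ‖g‖) * ‖w‖ :=
        hinner.trans (mul_le_mul_of_nonneg_right hlip (norm_nonneg w))
      calc -(lam * ⟪F' z, w⟫) = lam * (-⟪F' z, w⟫) := by ring
      _ ≤ lam * (L * (lam * (1 - c) * ‖g‖) * ‖w‖) :=
          mul_le_mul_of_nonneg_left h1 hlam0.le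
    rw [hR]
    have expand1 : lam * (L * (lam * (1 - c) * ‖g‖) * ‖w‖)
        = lam * (ζ ^ 2 / 8 * ((1 - c) * (‖g‖ * ‖w‖))) := by
      rw [show lam * (L * (lam * (1 - c) * ‖g‖) * ‖w‖)
        = (L * lam) * (lam * ((1 - c) * (‖g‖ * ‖w‖))) by ring, hLl]; ring
    have expand2 : L / 2 * (lam * ‖w‖) ^ 2 = lam * (ζ ^ 2 / 16 * ‖w‖ ^ 2) := by
      rw [show L / 2 * (lam * ‖w‖) ^ 2 = (L * lam) * (lam * ‖w‖ ^ 2) / 2 by ring, hLl]; ring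
    have keyl := mul_le_mul_of_nonneg_left key hlam0.le
    linarith [hsz, hFz, hib, keyl, expand1, expand2]
  · -- c > 1 : easy case
    push_neg at hcase
    have hxp2 : xp = x - lam • g := by rw [← hxg]; abel
    have hs := hsmooth xp (x - lam • p)
    rw [hK1] at hs
    have ey : x - lam • p - xp = lam • (g - p) := by rw [hxp2]; module
    rw [ey, inner_smul_right, inner_sub_right, real_inner_self_eq_norm_sq,
      norm_smul, Real.norm_eq_abs, abs_of_pos hlam0] at hs
    have h1 : lam * (‖g‖ ^ 2 - ⟪g, p⟫) ≤ 0 :=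
      mul_nonpos_of_nonneg_of_nonpos hlam0.le (by linarith)
    have hgp2 : ‖g - p‖ ^ 2 ≤ ‖g‖ ^ 2 := by
      nlinarith [hedge, mul_nonneg (sq_nonneg ζ) hG2.le]
    have expand2 : L / 2 * (lam * ‖g - p‖) ^ 2 = lam * (ζ ^ 2 / 16 * ‖g - p‖ ^ 2) := by
      rw [show L / 2 * (lam * ‖g - p‖) ^ 2 = L * lam * (lam * ‖g - p‖ ^ 2) / 2 by ring, hLl]
      ring
    rw [hR]
    have hB1 := mul_le_mul_of_nonneg_left hgp2 (by positivity : (0:ℝ) ≤ lam * (ζ ^ 2 / 16))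
    have hB2 := mul_le_mul_of_nonneg_left
      (show ζ ^ 2 / 2 + ζ ^ 2 / 16 ≤ 1 by nlinarith) (mul_nonneg hlam0.le hG2.le)
    linarith [hs, hK2, h1, expand2, hB1, hB2]
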